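/- arXiv:2405.16359 — 4 statements merged into one kernel-verified Lean document; each statement's English description precedes it below -/
import Mathlib

section
/- Let f = f̃/Z be a normalized target with unnormalized density f̃, g a normalized proposal, and w̃ = f̃/g. For any test function h with sup|h| ≤ 1, the autonormalized importance sampling estimator I^AIS = (Σ w̃(Xⁿ) h(Xⁿ))/(Σ w̃(Xⁿ)), with X⁽ⁿ⁾ i.i.d. ~ g, satisfies |E[I^AIS − I_f[h]]| ≤ (2/N)·E_g[w̃²]/(E_g[w̃])² and E[(I^AIS − I_f[h])²] ≤ (4/N)·E_g[w̃²]/(E_g[w̃])². -/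
set_option maxHeartbeats 1000000


open MeasureTheory ProbabilityTheory
open scoped ENNReal NNReal

/-- **Autonormalized importance sampling error.** With target `f = f̃/Z` (unnormalized
`f̃`, `Z > 0`), normalized proposal `g`, weights `w̃ = f̃/g`, i.i.d. draws `X⁽ⁿ⁾ ~ g`, and
any test function `h` bounded by 1, the autonormalized estimator
`I^AIS = (∑ w̃(Xⁿ)h(Xⁿ)) / (∑ w̃(Xⁿ))` satisfies
`|E[I^AIS − I_f[h]]| ≤ (2/N)·E_g[w̃²]/(E_g[w̃])²` and
`E[(I^AIS − I_f[h])²] ≤ (4/N)·E_g[w̃²]/(E_g[w̃])²`. -/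
theorem autonormalized_importance_sampling_error
    {E : Type*} [MeasurableSpace E] (μ : Measure E) [SigmaFinite μ]
    (f g ftilde : E → ℝ) (hf : Measurable f) (hg : Measurable g)
    (hf0 : ∀ x, 0 ≤ f x) (hg0 : ∀ x, 0 ≤ g x)
    (hf1 : ∫ x, f x ∂μ = 1) (hg1 : ∫ x, g x ∂μ = 1)
    (Z : ℝ) (hZ : 0 < Z) (hft : ∀ x, ftilde x = Z * f x)
    (hsupp : ∀ x, g x = 0 → f x = 0)
    (wt : E → ℝ) (hwt : ∀ x, wt x = ftilde x / g x)
    (ν : Measure E) (hν : ν = μ.withDensity fun x => ENNReal.ofReal (g x))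
    (hwt2 : MemLp wt 2 ν)
    (h : E → ℝ) (hh : Measurable h) (hhb : ∀ x, |h x| ≤ 1)
    {Ω : Type*} [MeasurableSpace Ω] (P : Measure Ω) [IsProbabilityMeasure P]
    (N : ℕ) (hN : 0 < N)
    (X : Fin N → Ω → E) (hX : ∀ n, Measurable (X n))
    (hiid : iIndepFun X P)
    (hlaw : ∀ n, Measure.map (X n) P = ν)
    (AIS : Ω → ℝ)
    (hAIS : ∀ ω, AIS ω = (∑ n, wt (X n ω) * h (X n ω)) / ∑ n, wt (X n ω)) :
    |∫ ω, (AIS ω - ∫ x, h x * f x ∂μ) ∂P|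
        ≤ (2 / N) * (∫ x, wt x ^ 2 ∂ν) / (∫ x, wt x ∂ν) ^ 2 ∧
      (∫ ω, (AIS ω - ∫ x, h x * f x ∂μ) ^ 2 ∂P)
        ≤ (4 / N) * (∫ x, wt x ^ 2 ∂ν) / (∫ x, wt x ∂ν) ^ 2 := by
  have hNR : (0:ℝ) < (N:ℝ) := by exact_mod_cast hN
  have hNZ : (0:ℝ) < (N:ℝ) * Z := mul_pos hNR hZ
  -- wt is measurable and nonnegative
  have hwtfun : wt = fun x => Z * f x / g x := funext fun x => by rw [hwt x, hft x]
  have hwtm : Measurable wt := by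
    rw [hwtfun]; exact (measurable_const.mul hf).div hg
  have hwt0 : ∀ x, 0 ≤ wt x := fun x => by
    rw [hwt x, hft x]; exact div_nonneg (mul_nonneg hZ.le (hf0 x)) (hg0 x)
  -- integrability of f and g
  have hfInt : Integrable f μ := by
    by_contra hc
    rw [integral_undef hc] at hf1
    exact one_ne_zero hf1.symm
  have hgInt : Integrable g μ := by
    by_contra hc
    rw [integral_undef hc] at hg1
    exact one_ne_zero hg1.symm
  -- ν is a probability measure
  haveI hνp : IsProbabilityMeasure ν := by
    refine ⟨?_⟩
    rw [hν, withDensity_apply _ MeasurableSet.univ, setLIntegral_univ,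
      ← ofReal_integral_eq_lintegral_ofReal hgInt (Filter.Eventually.of_forall hg0), hg1,
      ENNReal.ofReal_one]
  -- transfer ν-integrals to μ-integrals
  have hkey : ∀ F : E → ℝ, ∫ x, F x ∂ν = ∫ x, g x * F x ∂μ := by
    intro F
    rw [hν]
    have h1 : (fun x => ENNReal.ofReal (g x)) = (fun x => ((g x).toNNReal : ℝ≥0∞)) := rfl
    rw [h1, integral_withDensity_eq_integral_smul hg.real_toNNReal F]
    refine integral_congr_ae (Filter.Eventually.of_forall fun x => ?_)
    simp [NNReal.smul_def, Real.coe_toNNReal _ (hg0 x)]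
  -- pointwise identity g * wt = Z * f
  have hgw : ∀ x, g x * wt x = Z * f x := by
    intro x
    rw [hwt x, hft x]
    rcases eq_or_ne (g x) 0 with h0 | h0
    · rw [h0, hsupp x h0]; simp
    · field_simp
  have hZν : ∫ x, wt x ∂ν = Z := by
    rw [hkey wt]
    have h2 : (fun x => g x * wt x) = fun x => Z * f x := funext hgw
    rw [h2, integral_const_mul, hf1, mul_one]
  set I₀ := ∫ x, h x * f x ∂μ with hI₀def
  clear_value I₀
  set T := ∫ x, wt x ^ 2 ∂ν with hTdef
  clear_value T
  -- the function wt * h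
  set Hf : E → ℝ := fun x => wt x * h x with hHfdef
  clear_value Hf
  have hHfm : Measurable Hf := by rw [hHfdef]; exact hwtm.mul hh
  have hHmean : ∫ x, Hf x ∂ν = Z * I₀ := by
    rw [hkey Hf]
    have h2 : (fun x => g x * Hf x) = fun x => Z * (h x * f x) := by
      funext x
      simp only [hHfdef]
      rw [← mul_assoc, hgw x]
      ring
    rw [h2, integral_const_mul, ← hI₀def]
  have hT0 : 0 ≤ T := by rw [hTdef]; exact integral_nonneg fun x => sq_nonneg _
  have hHf2 : MemLp Hf 2 ν := by
    refine hwt2.of_le hHfm.aestronglyMeasurable (Filter.Eventually.of_forall fun x => ?_)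
    simp only [hHfdef, Real.norm_eq_abs, abs_mul]
    exact mul_le_of_le_one_right (abs_nonneg _) (hhb x)
  have hvarwt : variance wt ν ≤ T := by
    rw [variance_eq_sub hwt2]
    simp only [Pi.pow_apply]
    have := sq_nonneg (∫ x, wt x ∂ν)
    rw [hTdef]; linarith
  have hvarH : variance Hf ν ≤ T := by
    rw [variance_eq_sub hHf2]
    simp only [Pi.pow_apply]
    have h1 : ∫ x, Hf x ^ 2 ∂ν ≤ T := by
      rw [hTdef]
      refine integral_mono hHf2.integrable_sq hwt2.integrable_sq fun x => ?_
      simp only [hHfdef]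
      have hh2 : h x ^ 2 ≤ 1 := by
        nlinarith [sq_abs (h x), abs_nonneg (h x), hhb x]
      calc (wt x * h x) ^ 2 = wt x ^ 2 * h x ^ 2 := by ring
        _ ≤ wt x ^ 2 * 1 := mul_le_mul_of_nonneg_left hh2 (sq_nonneg _)
        _ = wt x ^ 2 := mul_one _
    nlinarith [sq_nonneg (∫ x, Hf x ∂ν)]
  -- transfer to Ω
  have hmapint : ∀ (n : Fin N) (F : E → ℝ), Measurable F →
      ∫ ω, F (X n ω) ∂P = ∫ x, F x ∂ν := by
    intro n F hF
    rw [← hlaw n, integral_map (hX n).aemeasurable hF.aestronglyMeasurable]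
  have hmemc : ∀ (n : Fin N) (F : E → ℝ), Measurable F → MemLp F 2 ν →
      MemLp (fun ω => F (X n ω)) 2 P := by
    intro n F hF hFm
    rw [← hlaw n] at hFm
    exact (memLp_map_measure_iff hF.aestronglyMeasurable (hX n).aemeasurable).mp hFm
  have hvarc : ∀ (n : Fin N) (F : E → ℝ), Measurable F → MemLp F 2 ν →
      variance (fun ω => F (X n ω)) P = variance F ν := by
    intro n F hF hFm
    rw [variance_eq_sub (hmemc n F hF hFm), variance_eq_sub hFm]
    simp only [Pi.pow_apply]
    have h2 := hmapint n (fun x => F x ^ 2) (hF.pow_const 2)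
    rw [hmapint n F hF, h2]
  -- the sums
  set Sw : Ω → ℝ := fun ω => ∑ n, wt (X n ω) with hSwdef
  clear_value Sw
  set Sh : Ω → ℝ := fun ω => ∑ n, wt (X n ω) * h (X n ω) with hShdef
  clear_value Sh
  have hSwm : Measurable Sw := by
    rw [hSwdef]; exact Finset.measurable_sum _ fun n _ => hwtm.comp (hX n)
  have hShm : Measurable Sh := by
    rw [hShdef]
    exact Finset.measurable_sum _ fun n _ => (hwtm.comp (hX n)).mul (hh.comp (hX n))
  have hSwMem : MemLp Sw 2 P := by
    have := memLp_finset_sum (μ := P) Finset.univ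
      (f := fun (n : Fin N) => fun ω => wt (X n ω)) (fun n _ => hmemc n wt hwtm hwt2)
    rw [hSwdef]; exact this
  have hShMem : MemLp Sh 2 P := by
    have := memLp_finset_sum (μ := P) Finset.univ
      (f := fun (n : Fin N) => fun ω => Hf (X n ω)) (fun n _ => hmemc n Hf hHfm hHf2)
    simp only [hHfdef] at this
    rw [hShdef]; exact this
  have hSwInt : Integrable Sw P := hSwMem.integrable one_le_two
  have hShInt : Integrable Sh P := hShMem.integrable one_le_two
  -- means
  have hSwMean : ∫ ω, Sw ω ∂P = (N : ℝ) * Z := by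
    rw [hSwdef]
    rw [integral_finset_sum _ fun n _ => (hmemc n wt hwtm hwt2).integrable one_le_two]
    have h1 : ∀ n : Fin N, ∫ ω, wt (X n ω) ∂P = Z := fun n => by
      rw [hmapint n wt hwtm, hZν]
    simp [h1]
  have hShMean : ∫ ω, Sh ω ∂P = (N : ℝ) * (Z * I₀) := by
    rw [hShdef]
    have hint := fun (n : Fin N) => (hmemc n Hf hHfm hHf2).integrable one_le_two
    simp only [hHfdef] at hint
    rw [integral_finset_sum _ fun n _ => hint n]
    have h1 : ∀ n : Fin N, ∫ ω, wt (X n ω) * h (X n ω) ∂P = Z * I₀ := fun n => by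
      have h3 := hmapint n Hf hHfm
      have h4 := hHmean
      simp only [hHfdef] at h3 h4
      rw [h3, h4]
    simp [h1]
  -- variances
  have hiidW : iIndepFun (fun (n : Fin N) => wt ∘ (X n)) P :=
    hiid.comp (fun _ => wt) (fun _ => hwtm)
  have hiidH : iIndepFun (fun (n : Fin N) => Hf ∘ (X n)) P :=
    hiid.comp (fun _ => Hf) (fun _ => hHfm)
  have hSwVar : variance Sw P ≤ (N : ℝ) * T := by
    have hsum : variance (∑ n : Fin N, (wt ∘ X n)) P = ∑ n : Fin N, variance (wt ∘ X n) P :=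
      IndepFun.variance_sum (fun n _ => hmemc n wt hwtm hwt2)
        (fun i _ j _ hij => hiidW.indepFun hij)
    have hSweq : Sw = ∑ n : Fin N, (wt ∘ X n) := by
      funext ω; simp [hSwdef, Function.comp]
    rw [hSweq, hsum]
    have heach : ∀ n : Fin N, variance (wt ∘ X n) P = variance wt ν := fun n =>
      hvarc n wt hwtm hwt2
    rw [Finset.sum_congr rfl fun n _ => heach n, Finset.sum_const, Finset.card_univ,
      Fintype.card_fin, nsmul_eq_mul]
    exact mul_le_mul_of_nonneg_left hvarwt (Nat.cast_nonneg N)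
  have hShVar : variance Sh P ≤ (N : ℝ) * T := by
    have hsum : variance (∑ n : Fin N, (Hf ∘ X n)) P = ∑ n : Fin N, variance (Hf ∘ X n) P :=
      IndepFun.variance_sum (fun n _ => hmemc n Hf hHfm hHf2)
        (fun i _ j _ hij => hiidH.indepFun hij)
    have hSheq : Sh = ∑ n : Fin N, (Hf ∘ X n) := by
      funext ω; simp [hShdef, hHfdef, Function.comp]
    rw [hSheq, hsum]
    have heach : ∀ n : Fin N, variance (Hf ∘ X n) P = variance Hf ν := fun n =>
      hvarc n Hf hHfm hHf2
    rw [Finset.sum_congr rfl fun n _ => heach n, Finset.sum_const, Finset.card_univ,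
      Fintype.card_fin, nsmul_eq_mul]
    exact mul_le_mul_of_nonneg_left hvarH (Nat.cast_nonneg N)
  -- second moment forms
  have hSwCsq : ∫ ω, (Sw ω - (N : ℝ) * Z) ^ 2 ∂P = variance Sw P := by
    have hv : variance Sw P = ∫ ω, (Sw ω - (N : ℝ) * Z) ^ 2 ∂P := by
      rw [variance_eq_integral hSwMem.aemeasurable, hSwMean]
    exact hv.symm
  have hShCsq : ∫ ω, (Sh ω - (N : ℝ) * (Z * I₀)) ^ 2 ∂P = variance Sh P := by
    have hv : variance Sh P = ∫ ω, (Sh ω - (N : ℝ) * (Z * I₀)) ^ 2 ∂P := by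
      rw [variance_eq_integral hShMem.aemeasurable, hShMean]
    exact hv.symm
  -- pointwise structure of AIS
  have hAISfun : AIS = fun ω => Sh ω / Sw ω := by
    simp only [hShdef, hSwdef]
    exact funext hAIS
  have hAISm : Measurable AIS := by
    rw [hAISfun]; exact hShm.div hSwm
  have hYnn : ∀ ω, 0 ≤ Sw ω := fun ω => by
    rw [hSwdef]; exact Finset.sum_nonneg fun n _ => hwt0 _
  have hShabs : ∀ ω, |Sh ω| ≤ Sw ω := by
    intro ω
    rw [hShdef, hSwdef]
    calc |∑ n, wt (X n ω) * h (X n ω)| ≤ ∑ n, |wt (X n ω) * h (X n ω)| :=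
          Finset.abs_sum_le_sum_abs _ _
      _ ≤ ∑ n, wt (X n ω) := by
          refine Finset.sum_le_sum fun n _ => ?_
          rw [abs_mul, abs_of_nonneg (hwt0 _)]
          exact mul_le_of_le_one_right (hwt0 _) (hhb _)
  have hShW : ∀ ω, AIS ω * Sw ω = Sh ω := by
    intro ω
    rw [hAISfun]
    simp only []
    rcases (hYnn ω).eq_or_lt with h0 | h0
    · have hz : Sh ω = 0 := by
        have := hShabs ω
        rw [← h0] at this
        have h2 := abs_nonneg (Sh ω)
        have : |Sh ω| = 0 := le_antisymm this h2
        exact abs_eq_zero.mp this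
      rw [hz]; simp
    · exact div_mul_cancel₀ _ (ne_of_gt h0)
  have hAISb : ∀ ω, |AIS ω| ≤ 1 := by
    intro ω
    rw [hAISfun]
    simp only []
    rw [abs_div]
    rcases (hYnn ω).eq_or_lt with h0 | h0
    · rw [← h0]; simp
    · rw [abs_of_pos h0, div_le_one h0]
      exact hShabs ω
  -- |I₀| ≤ 1
  have hI₀int : Integrable (fun x => h x * f x) μ := by
    refine hfInt.mono' ((hh.mul hf).aestronglyMeasurable)
      (Filter.Eventually.of_forall fun x => ?_)
    rw [Real.norm_eq_abs, abs_mul, abs_of_nonneg (hf0 x)]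
    exact mul_le_of_le_one_left (hf0 x) (hhb x)
  have hI₀b : |I₀| ≤ 1 := by
    rw [hI₀def]
    have habs : Integrable (fun x => |h x| * |f x|) μ := by
      simpa [abs_mul] using hI₀int.abs
    calc |∫ x, h x * f x ∂μ| ≤ ∫ x, |h x| * |f x| ∂μ := by
          simpa [Real.norm_eq_abs, abs_mul] using
            norm_integral_le_integral_norm (fun x => h x * f x) (μ := μ)
      _ ≤ ∫ x, f x ∂μ := by
          refine integral_mono habs hfInt fun x => ?_
          rw [abs_of_nonneg (hf0 x)]
          exact mul_le_of_le_one_left (hf0 x) (hhb x)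
      _ = 1 := hf1
  -- decomposition
  set A : Ω → ℝ := fun ω => Sh ω - (N : ℝ) * (Z * I₀) with hAdef
  clear_value A
  set B : Ω → ℝ := fun ω => AIS ω * (Sw ω - (N : ℝ) * Z) with hBdef
  clear_value B
  have hident : ∀ ω, AIS ω - I₀ = (A ω - B ω) / ((N : ℝ) * Z) := by
    intro ω
    simp only [hAdef, hBdef]
    rw [eq_div_iff (ne_of_gt hNZ)]
    have h1 := hShW ω
    linear_combination h1
  have hAmem : MemLp A 2 P := by rw [hAdef]; exact hShMem.sub (memLp_const _)
  have hSwC : MemLp (fun ω => Sw ω - (N : ℝ) * Z) 2 P := hSwMem.sub (memLp_const _)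
  have hBmeas : Measurable B := by
    rw [hBdef]; exact hAISm.mul (hSwm.sub measurable_const)
  have hBmem : MemLp B 2 P := by
    refine hSwC.of_le hBmeas.aestronglyMeasurable (Filter.Eventually.of_forall fun ω => ?_)
    rw [hBdef]
    simp only [Real.norm_eq_abs, abs_mul]
    exact mul_le_of_le_one_left (abs_nonneg _) (hAISb ω)
  have hA2int : Integrable (fun ω => A ω ^ 2) P := hAmem.integrable_sq
  have hB2int : Integrable (fun ω => B ω ^ 2) P := hBmem.integrable_sq
  have hSwC2int : Integrable (fun ω => (Sw ω - (N : ℝ) * Z) ^ 2) P := hSwC.integrable_sq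
  have hA2 : ∫ ω, A ω ^ 2 ∂P ≤ (N : ℝ) * T := by
    simp only [hAdef]
    rw [hShCsq]; exact hShVar
  have hSwC2 : ∫ ω, (Sw ω - (N : ℝ) * Z) ^ 2 ∂P ≤ (N : ℝ) * T := by
    rw [hSwCsq]; exact hSwVar
  have hB2 : ∫ ω, B ω ^ 2 ∂P ≤ (N : ℝ) * T := by
    have hle : ∫ ω, B ω ^ 2 ∂P ≤ ∫ ω, (Sw ω - (N : ℝ) * Z) ^ 2 ∂P := by
      refine integral_mono hB2int hSwC2int fun ω => ?_
      simp only [hBdef, mul_pow]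
      have h1 : AIS ω ^ 2 ≤ 1 := by
        have := hAISb ω
        nlinarith [sq_abs (AIS ω), abs_nonneg (AIS ω)]
      nlinarith [sq_nonneg (Sw ω - (N : ℝ) * Z)]
    exact hle.trans hSwC2
  -- MSE bound
  have hABmem : MemLp (fun ω => A ω - B ω) 2 P := hAmem.sub hBmem
  have hAB2int : Integrable (fun ω => (A ω - B ω) ^ 2) P := hABmem.integrable_sq
  have hMSE : ∫ ω, (AIS ω - I₀) ^ 2 ∂P ≤ 4 * T / ((N : ℝ) * Z ^ 2) := by
    have hcalc : ∫ ω, (AIS ω - I₀) ^ 2 ∂P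
        = (∫ ω, (A ω - B ω) ^ 2 ∂P) / ((N : ℝ) * Z) ^ 2 := by
      rw [← integral_div]
      refine integral_congr_ae (Filter.Eventually.of_forall fun ω => ?_)
      dsimp only
      rw [hident ω, div_pow]
    rw [hcalc]
    have hnum : ∫ ω, (A ω - B ω) ^ 2 ∂P ≤ 4 * ((N : ℝ) * T) := by
      have h1 : ∫ ω, (A ω - B ω) ^ 2 ∂P ≤ ∫ ω, (2 * A ω ^ 2 + 2 * B ω ^ 2) ∂P := by
        refine integral_mono hAB2int ((hA2int.const_mul 2).add (hB2int.const_mul 2))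
          fun ω => ?_
        nlinarith [sq_nonneg (A ω + B ω)]
      rw [integral_add (hA2int.const_mul 2) (hB2int.const_mul 2), integral_const_mul,
        integral_const_mul] at h1
      linarith
    calc (∫ ω, (A ω - B ω) ^ 2 ∂P) / ((N : ℝ) * Z) ^ 2
        ≤ (4 * ((N : ℝ) * T)) / ((N : ℝ) * Z) ^ 2 := by
          gcongr
      _ = 4 * T / ((N : ℝ) * Z ^ 2) := by
          field_simp
  -- bias bound
  have hAint : Integrable A P := hAmem.integrable one_le_two
  have hBint : Integrable B P := hBmem.integrable one_le_two
  have hsint : Integrable (fun ω => Sw ω - (N : ℝ) * Z) P := hSwC.integrable one_le_two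
  have heMem : MemLp (fun ω => AIS ω - I₀) 2 P := by
    have hAISmem : MemLp AIS 2 P := by
      refine (memLp_const (1 : ℝ)).of_le hAISm.aestronglyMeasurable
        (Filter.Eventually.of_forall fun ω => ?_)
      simp [Real.norm_eq_abs, hAISb ω]
    exact hAISmem.sub (memLp_const _)
  have he2int : Integrable (fun ω => (AIS ω - I₀) ^ 2) P := heMem.integrable_sq
  have heint : Integrable (fun ω => AIS ω - I₀) P := heMem.integrable one_le_two
  have hAmean : ∫ ω, A ω ∂P = 0 := by
    simp only [hAdef]
    rw [integral_sub hShInt (integrable_const _), hShMean, integral_const]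
    simp
  have hSwCmean : ∫ ω, (Sw ω - (N : ℝ) * Z) ∂P = 0 := by
    rw [integral_sub hSwInt (integrable_const _), hSwMean, integral_const]
    simp
  have hesInt : Integrable (fun ω => (AIS ω - I₀) * (Sw ω - (N : ℝ) * Z)) P := by
    refine ((he2int.div_const 2).add (hSwC2int.div_const 2)).mono'
      (((hAISm.sub measurable_const).mul (hSwm.sub measurable_const)).aestronglyMeasurable)
      (Filter.Eventually.of_forall fun ω => ?_)
    simp only [Pi.add_apply]
    rw [Real.norm_eq_abs, abs_mul]
    nlinarith [sq_nonneg (|AIS ω - I₀| - |Sw ω - (N : ℝ) * Z|), sq_abs (AIS ω - I₀),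
      sq_abs (Sw ω - (N : ℝ) * Z), abs_nonneg (AIS ω - I₀), abs_nonneg (Sw ω - (N : ℝ) * Z)]
  have hBeq : ∫ ω, B ω ∂P = ∫ ω, (AIS ω - I₀) * (Sw ω - (N : ℝ) * Z) ∂P := by
    have hpt : ∀ ω, B ω = (AIS ω - I₀) * (Sw ω - (N : ℝ) * Z)
        + I₀ * (Sw ω - (N : ℝ) * Z) := by
      intro ω; simp only [hBdef]; ring
    calc ∫ ω, B ω ∂P
        = ∫ ω, ((AIS ω - I₀) * (Sw ω - (N : ℝ) * Z) + I₀ * (Sw ω - (N : ℝ) * Z)) ∂P :=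
          integral_congr_ae (Filter.Eventually.of_forall hpt)
      _ = (∫ ω, (AIS ω - I₀) * (Sw ω - (N : ℝ) * Z) ∂P)
          + I₀ * ∫ ω, (Sw ω - (N : ℝ) * Z) ∂P := by
          rw [integral_add hesInt (hsint.const_mul I₀), integral_const_mul]
      _ = ∫ ω, (AIS ω - I₀) * (Sw ω - (N : ℝ) * Z) ∂P := by
          rw [hSwCmean, mul_zero, add_zero]
  have hes : |∫ ω, (AIS ω - I₀) * (Sw ω - (N : ℝ) * Z) ∂P| ≤ 2 * T / Z := by
    set c : ℝ := (N : ℝ) * Z / 2 with hcdef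
    have hc : 0 < c := by rw [hcdef]; positivity
    have hRint : Integrable (fun ω => (c * (AIS ω - I₀) ^ 2 + (Sw ω - (N : ℝ) * Z) ^ 2 / c) / 2) P :=
      ((he2int.const_mul c).add (hSwC2int.div_const c)).div_const 2
    have habs2 : Integrable (fun ω => |AIS ω - I₀| * |Sw ω - (N : ℝ) * Z|) P := by
      simpa [abs_mul] using hesInt.abs
    calc |∫ ω, (AIS ω - I₀) * (Sw ω - (N : ℝ) * Z) ∂P|
        ≤ ∫ ω, |AIS ω - I₀| * |Sw ω - (N : ℝ) * Z| ∂P := by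
          simpa [Real.norm_eq_abs, abs_mul] using
            norm_integral_le_integral_norm (fun ω => (AIS ω - I₀) * (Sw ω - (N : ℝ) * Z)) (μ := P)
      _ ≤ ∫ ω, (c * (AIS ω - I₀) ^ 2 + (Sw ω - (N : ℝ) * Z) ^ 2 / c) / 2 ∂P := by
          refine integral_mono habs2 hRint fun ω => ?_
          have hkey2 : 2 * c * (|AIS ω - I₀| * |Sw ω - (N : ℝ) * Z|)
              ≤ c ^ 2 * (AIS ω - I₀) ^ 2 + (Sw ω - (N : ℝ) * Z) ^ 2 := by
            nlinarith [sq_nonneg (c * |AIS ω - I₀| - |Sw ω - (N : ℝ) * Z|),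
              sq_abs (AIS ω - I₀), sq_abs (Sw ω - (N : ℝ) * Z)]
          have h2c : (0:ℝ) < 2 * c := by positivity
          calc |AIS ω - I₀| * |Sw ω - (N : ℝ) * Z|
              = (2 * c * (|AIS ω - I₀| * |Sw ω - (N : ℝ) * Z|)) / (2 * c) := by
                field_simp
            _ ≤ (c ^ 2 * (AIS ω - I₀) ^ 2 + (Sw ω - (N : ℝ) * Z) ^ 2) / (2 * c) := by
                gcongr
            _ = (c * (AIS ω - I₀) ^ 2 + (Sw ω - (N : ℝ) * Z) ^ 2 / c) / 2 := by
                field_simp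
      _ = (c * ∫ ω, (AIS ω - I₀) ^ 2 ∂P + (∫ ω, (Sw ω - (N : ℝ) * Z) ^ 2 ∂P) / c) / 2 := by
          rw [integral_div, integral_add (he2int.const_mul c) (hSwC2int.div_const c),
            integral_const_mul, integral_div]
      _ ≤ (c * (4 * T / ((N : ℝ) * Z ^ 2)) + ((N : ℝ) * T) / c) / 2 := by
          gcongr
      _ = 2 * T / Z := by
          rw [hcdef]
          field_simp
          ring
  have hbias : |∫ ω, (AIS ω - I₀) ∂P| ≤ 2 * T / ((N : ℝ) * Z ^ 2) := by
    have h2 : ∫ ω, (AIS ω - I₀) ∂P = (0 - ∫ ω, B ω ∂P) / ((N : ℝ) * Z) := by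
      calc ∫ ω, (AIS ω - I₀) ∂P = ∫ ω, (A ω - B ω) / ((N : ℝ) * Z) ∂P :=
            integral_congr_ae (Filter.Eventually.of_forall hident)
        _ = (∫ ω, (A ω - B ω) ∂P) / ((N : ℝ) * Z) := integral_div _ _
        _ = (0 - ∫ ω, B ω ∂P) / ((N : ℝ) * Z) := by
            rw [integral_sub hAint hBint, hAmean]
    rw [h2, abs_div, abs_of_pos hNZ, zero_sub, abs_neg, hBeq]
    calc |∫ ω, (AIS ω - I₀) * (Sw ω - (N : ℝ) * Z) ∂P| / ((N : ℝ) * Z)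
        ≤ (2 * T / Z) / ((N : ℝ) * Z) := by gcongr
      _ = 2 * T / ((N : ℝ) * Z ^ 2) := by rw [div_div]; congr 1; ring
  -- conclude
  rw [hZν]
  constructor
  · calc |∫ ω, (AIS ω - I₀) ∂P| ≤ 2 * T / ((N : ℝ) * Z ^ 2) := hbias
      _ = 2 / (N : ℝ) * T / Z ^ 2 := by field_simp
  · calc ∫ ω, (AIS ω - I₀) ^ 2 ∂P ≤ 4 * T / ((N : ℝ) * Z ^ 2) := hMSE
      _ = 4 / (N : ℝ) * T / Z ^ 2 := by field_simp
end

section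
/- For the independence sampler with proposal density g and target density f satisfying f(x) ≤ M g(x) for all x (with M ≥ 1), the expected acceptance probability at stationarity is at least 1/M: if X ~ f and Z ~ g are independent, then E[min{1, (f(Z) g(X))/(f(X) g(Z))}] ≥ 1/M. -/
open MeasureTheory ProbabilityTheory

/-- **Acceptance rate of the independence sampler.** If `f ≤ M g` everywhere, `X ~ f`,
`Z ~ g` independent, and ties `f(Z)g(X) = f(X)g(Z)` have probability zero, then the
expected acceptance probability at stationarity is at least `1/M`. -/
theorem independence_sampler_acceptance_rate
    {E : Type*} [MeasurableSpace E] (μ : Measure E) [SigmaFinite μ]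
    (f g : E → ℝ) (hf : Measurable f) (hg : Measurable g)
    (hf0 : ∀ x, 0 < f x) (hg0 : ∀ x, 0 < g x)
    (hf1 : ∫ x, f x ∂μ = 1) (hg1 : ∫ x, g x ∂μ = 1)
    (M : ℝ) (hM : 1 ≤ M) (hMg : ∀ x, f x ≤ M * g x)
    {Ω : Type*} [MeasurableSpace Ω] (P : Measure Ω) [IsProbabilityMeasure P]
    (X Z : Ω → E) (hX : Measurable X) (hZ : Measurable Z)
    (hXlaw : Measure.map X P = μ.withDensity fun x => ENNReal.ofReal (f x))
    (hZlaw : Measure.map Z P = μ.withDensity fun x => ENNReal.ofReal (g x))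
    (hindep : IndepFun X Z P)
    (hties : P {ω | f (Z ω) * g (X ω) = f (X ω) * g (Z ω)} = 0) :
    1 / M ≤ ∫ ω, min 1 (f (Z ω) * g (X ω) / (f (X ω) * g (Z ω))) ∂P := by
  have hMpos : (0:ℝ) < M := lt_of_lt_of_le one_pos hM
  set ψ : E → ℝ := fun z => f z / (M * g z) with hψ
  have hψmeas : Measurable ψ := hf.div (measurable_const.mul hg)
  have hψle1 : ∀ z, ψ z ≤ 1 := fun z => by
    rw [hψ]
    exact (div_le_one (by have := hg0 z; positivity)).2 (hMg z)
  have hψ0 : ∀ z, 0 ≤ ψ z := fun z => by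
    have := (hf0 z).le; have := hg0 z
    simp only [hψ]; positivity
  have hle : ∀ ω, ψ (Z ω) ≤ min 1 (f (Z ω) * g (X ω) / (f (X ω) * g (Z ω))) := by
    intro ω
    refine le_min (hψle1 _) ?_
    rw [hψ]
    rw [div_le_div_iff₀ (by have := hg0 (Z ω); positivity)
      (by have := hf0 (X ω); have := hg0 (Z ω); positivity)]
    nlinarith [mul_le_mul_of_nonneg_left (hMg (X ω))
      (mul_nonneg (hf0 (Z ω)).le (hg0 (Z ω)).le)]
  have hφmeas : Measurable fun ω => min 1 (f (Z ω) * g (X ω) / (f (X ω) * g (Z ω))) :=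
    measurable_const.min (((hf.comp hZ).mul (hg.comp hX)).div ((hf.comp hX).mul (hg.comp hZ)))
  have hφint : Integrable (fun ω => min 1 (f (Z ω) * g (X ω) / (f (X ω) * g (Z ω)))) P := by
    refine (integrable_const (1:ℝ)).mono' hφmeas.aestronglyMeasurable ?_
    filter_upwards with ω
    have h0 : (0:ℝ) ≤ min 1 (f (Z ω) * g (X ω) / (f (X ω) * g (Z ω))) := by
      refine le_min one_pos.le ?_
      have := (hf0 (Z ω)).le; have := (hg0 (X ω)).le
      have := (hf0 (X ω)).le; have := (hg0 (Z ω)).le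
      positivity
    have h1 : min 1 (f (Z ω) * g (X ω) / (f (X ω) * g (Z ω))) ≤ 1 := min_le_left _ _
    rw [Real.norm_eq_abs, abs_of_nonneg h0]
    simpa using h1
  have hψint : Integrable (fun ω => ψ (Z ω)) P := by
    refine (integrable_const (1:ℝ)).mono' (hψmeas.comp hZ).aestronglyMeasurable ?_
    filter_upwards with ω
    rw [Real.norm_eq_abs, abs_of_nonneg (hψ0 _)]
    simpa using hψle1 (Z ω)
  have hmono := integral_mono hψint hφint hle
  refine le_trans ?_ hmono
  have h1 : ∫ ω, ψ (Z ω) ∂P = ∫ z, ψ z ∂(Measure.map Z P) :=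
    (integral_map hZ.aemeasurable hψmeas.aestronglyMeasurable).symm
  rw [h1, hZlaw]
  rw [show (fun x => ENNReal.ofReal (g x)) = fun x => ((g x).toNNReal : ENNReal) from rfl]
  rw [integral_withDensity_eq_integral_smul hg.real_toNNReal ψ]
  have heq : ∀ z, (g z).toNNReal • ψ z = f z / M := by
    intro z
    have hgz := (hg0 z).ne'
    simp only [hψ, NNReal.smul_def, Real.coe_toNNReal _ (hg0 z).le, smul_eq_mul]
    field_simp
  simp_rw [heq]
  rw [integral_div, hf1]
end

section
/- Let p be a Markov kernel on a state space E satisfying the minorization condition p(x, A) ≥ δ ν(A) for all x ∈ E and measurable A, for some δ ∈ (0,1) and probability measure ν, and suppose f is invariant for p. Then for every x and every n ≥ 1, the total variation distance between pⁿ(x,·) and f is at most (1 − δ)ⁿ. -/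
open MeasureTheory ProbabilityTheory
open scoped ENNReal NNReal

/-- `n`-fold iterate of a Markov kernel. -/
noncomputable def kernelIterate {α : Type*} [MeasurableSpace α]
    (p : Kernel α α) : ℕ → Kernel α α
  | 0 => Kernel.id
  | n + 1 => (kernelIterate p n) ∘ₖ p

instance kernelIterate_isMarkovKernel {α : Type*} [MeasurableSpace α]
    (p : Kernel α α) [IsMarkovKernel p] (n : ℕ) : IsMarkovKernel (kernelIterate p n) := by
  induction n with
  | zero => rw [kernelIterate]; infer_instance
  | succ n ih => rw [kernelIterate]; infer_instance

lemma integrable_of_bounded01 {α : Type*} [MeasurableSpace α] {g : α → ℝ}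
    (hgm : Measurable g) (hg0 : ∀ y, 0 ≤ g y) (hg1 : ∀ y, g y ≤ 1)
    (μ : Measure α) [IsFiniteMeasure μ] : Integrable g μ := by
  refine Integrable.mono' (integrable_const 1) hgm.aestronglyMeasurable ?_
  filter_upwards with y
  rw [Real.norm_eq_abs, abs_of_nonneg (hg0 y)]
  exact hg1 y

/-- One-step contraction of oscillation under the minorization condition. -/
lemma contraction_step {α : Type*} [MeasurableSpace α] [Nonempty α]
    (p : Kernel α α) [IsMarkovKernel p]
    (δ : ℝ) (hδ0 : 0 < δ) (hδ1 : δ < 1)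
    (ν : Measure α) [IsProbabilityMeasure ν]
    (hminor : ∀ x, ∀ A : Set α, MeasurableSet A → ENNReal.ofReal δ * ν A ≤ p x A)
    (g : α → ℝ) (hgm : Measurable g) (hg0 : ∀ y, 0 ≤ g y) (hg1 : ∀ y, g y ≤ 1)
    (r : ℝ) (hosc : ∀ y y', g y - g y' ≤ r)
    (x x' : α) :
    ∫ y, g y ∂(p x) - ∫ y, g y ∂(p x') ≤ (1 - δ) * r := by
  set c : ENNReal := ENNReal.ofReal δ with hc
  have hle : ∀ z, (c • ν) ≤ p z := by
    intro z
    refine Measure.le_iff.2 fun s hs => ?_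
    simpa [hc, smul_eq_mul] using hminor z s hs
  haveI : IsFiniteMeasure (c • ν) := by
    constructor
    rw [Measure.smul_apply, smul_eq_mul]
    exact ENNReal.mul_lt_top ENNReal.ofReal_lt_top (measure_lt_top ν _)
  set ρ : α → Measure α := fun z => p z - c • ν with hρ
  have hmass : ∀ z, ((ρ z) Set.univ).toReal = 1 - δ := by
    intro z
    rw [hρ]
    simp only
    rw [Measure.sub_apply MeasurableSet.univ (hle z), Measure.smul_apply, smul_eq_mul]
    rw [measure_univ, measure_univ, mul_one]
    rw [show (1 : ℝ≥0∞) - ENNReal.ofReal δ = ENNReal.ofReal (1 - δ) by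
      rw [ENNReal.ofReal_sub _ hδ0.le, ENNReal.ofReal_one]]
    exact ENNReal.toReal_ofReal (by linarith)
  have hdec : ∀ z, ∫ y, g y ∂(p z) = ∫ y, g y ∂(ρ z) + ∫ y, g y ∂(c • ν) := by
    intro z
    conv_lhs => rw [← Measure.sub_add_cancel_of_le (hle z)]
    exact integral_add_measure (integrable_of_bounded01 hgm hg0 hg1 _)
      (integrable_of_bounded01 hgm hg0 hg1 _)
  -- infimum of g
  set m : ℝ := ⨅ y, g y with hm
  have hbdd : BddBelow (Set.range g) := ⟨0, by rintro _ ⟨y, rfl⟩; exact hg0 y⟩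
  have hm_le : ∀ y, m ≤ g y := fun y => ciInf_le hbdd y
  have h_le_m : ∀ y, g y ≤ m + r := by
    intro y
    have : g y - r ≤ m := le_ciInf fun y' => by linarith [hosc y y']
    linarith
  have hub : ∫ y, g y ∂(ρ x) ≤ (m + r) * (1 - δ) := by
    calc ∫ y, g y ∂(ρ x) ≤ ∫ _, (m + r) ∂(ρ x) :=
          integral_mono (integrable_of_bounded01 hgm hg0 hg1 _) (integrable_const _) h_le_m
      _ = (m + r) * (1 - δ) := by
          rw [integral_const, smul_eq_mul, measureReal_def, hmass x, mul_comm]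
  have hlb : m * (1 - δ) ≤ ∫ y, g y ∂(ρ x') := by
    calc m * (1 - δ) = ∫ _, m ∂(ρ x') := by
          rw [integral_const, smul_eq_mul, measureReal_def, hmass x', mul_comm]
      _ ≤ ∫ y, g y ∂(ρ x') :=
          integral_mono (integrable_const _) (integrable_of_bounded01 hgm hg0 hg1 _) hm_le
  have := hdec x
  have := hdec x'
  nlinarith [hub, hlb]

/-- Oscillation bound for the iterated kernel. -/
lemma kernelIterate_osc {α : Type*} [MeasurableSpace α]
    (p : Kernel α α) [IsMarkovKernel p]
    (δ : ℝ) (hδ0 : 0 < δ) (hδ1 : δ < 1)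
    (ν : Measure α) [IsProbabilityMeasure ν]
    (hminor : ∀ x, ∀ A : Set α, MeasurableSet A → ENNReal.ofReal δ * ν A ≤ p x A)
    (n : ℕ) : ∀ (x x' : α) (A : Set α), MeasurableSet A →
      ((kernelIterate p n) x A).toReal - ((kernelIterate p n) x' A).toReal ≤ (1 - δ) ^ n := by
  induction n with
  | zero =>
    intro x x' A hA
    have h1 : ((kernelIterate p 0) x A).toReal ≤ 1 :=
      ENNReal.toReal_le_of_le_ofReal zero_le_one (by simpa using prob_le_one)
    have h2 : (0 : ℝ) ≤ ((kernelIterate p 0) x' A).toReal := ENNReal.toReal_nonneg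
    simpa using by linarith
  | succ n ih =>
    intro x x' A hA
    haveI : Nonempty α := ⟨x⟩
    set g : α → ℝ := fun y => ((kernelIterate p n) y A).toReal with hg
    have hgm : Measurable g := (Kernel.measurable_coe _ hA).ennreal_toReal
    have hg0 : ∀ y, 0 ≤ g y := fun y => ENNReal.toReal_nonneg
    have hg1 : ∀ y, g y ≤ 1 := fun y =>
      ENNReal.toReal_le_of_le_ofReal zero_le_one (by simpa using prob_le_one)
    have hosc : ∀ y y', g y - g y' ≤ (1 - δ) ^ n := fun y y' => ih y y' A hA
    have hrepr : ∀ z, ((kernelIterate p (n + 1)) z A).toReal = ∫ y, g y ∂(p z) := by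
      intro z
      rw [show kernelIterate p (n + 1) = (kernelIterate p n) ∘ₖ p from rfl,
        Kernel.comp_apply' _ _ _ hA]
      exact (integral_toReal ((Kernel.measurable_coe _ hA).aemeasurable)
        (ae_of_all _ fun y => measure_lt_top _ _)).symm
    rw [hrepr x, hrepr x']
    calc ∫ y, g y ∂(p x) - ∫ y, g y ∂(p x') ≤ (1 - δ) * (1 - δ) ^ n :=
          contraction_step p δ hδ0 hδ1 ν hminor g hgm hg0 hg1 _ hosc x x'
      _ = (1 - δ) ^ (n + 1) := by ring

/-- **Minorization implies uniform ergodicity.** If a Markov kernel `p` satisfies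
`p(x, A) ≥ δ ν(A)` for all `x` and measurable `A` (with `δ ∈ (0,1)` and `ν` a
probability measure), and `f` is an invariant probability measure of `p`, then for all
`x`, `n` and measurable `A`, `|pⁿ(x, A) − f(A)| ≤ (1 − δ)ⁿ`; i.e. the total variation
distance between `pⁿ(x,·)` and `f` is at most `(1 − δ)ⁿ`. -/
theorem minorization_uniform_ergodicity
    {α : Type*} [MeasurableSpace α]
    (p : Kernel α α) [IsMarkovKernel p]
    (δ : ℝ) (hδ0 : 0 < δ) (hδ1 : δ < 1)
    (ν : Measure α) [IsProbabilityMeasure ν]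
    (hminor : ∀ x, ∀ A : Set α, MeasurableSet A → ENNReal.ofReal δ * ν A ≤ p x A)
    (f : Measure α) [IsProbabilityMeasure f]
    (hinv : f.bind (fun x => p x) = f) :
    ∀ (x : α) (n : ℕ) (A : Set α), MeasurableSet A →
      |((kernelIterate p n) x A).toReal - (f A).toReal| ≤ (1 - δ) ^ n := by
  intro x n A hA
  -- f is invariant for the iterated kernel
  have hfbind : f.bind (fun y => (kernelIterate p n) y) = f := by
    induction n with
    | zero =>
      have : (fun y => (kernelIterate p 0) y) = fun y => Measure.dirac y := by
        funext y; rw [show kernelIterate p 0 = Kernel.id from rfl, Kernel.id_apply]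
      rw [this]
      exact Measure.bind_dirac
    | succ n ih =>
      have h1 : (fun y => (kernelIterate p (n + 1)) y)
          = fun y => (p y).bind (fun z => (kernelIterate p n) z) := by
        funext y
        rw [show kernelIterate p (n + 1) = (kernelIterate p n) ∘ₖ p from rfl,
          Kernel.comp_apply]
      rw [h1, ← Measure.bind_bind (Kernel.measurable p).aemeasurable (Kernel.measurable _).aemeasurable, hinv, ih]
  set g : α → ℝ := fun y => ((kernelIterate p n) y A).toReal with hg
  have hgm : Measurable g := (Kernel.measurable_coe _ hA).ennreal_toReal
  have hg0 : ∀ y, 0 ≤ g y := fun y => ENNReal.toReal_nonneg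
  have hg1 : ∀ y, g y ≤ 1 := fun y =>
    ENNReal.toReal_le_of_le_ofReal zero_le_one (by simpa using prob_le_one)
  have hosc := kernelIterate_osc p δ hδ0 hδ1 ν hminor n
  have hfA : (f A).toReal = ∫ y, g y ∂f := by
    conv_lhs => rw [← hfbind]
    rw [Measure.bind_apply hA (Kernel.measurable _).aemeasurable]
    exact (integral_toReal ((Kernel.measurable_coe _ hA).aemeasurable)
      (ae_of_all _ fun y => measure_lt_top _ _)).symm
  have hInt : Integrable g f := integrable_of_bounded01 hgm hg0 hg1 f
  have hpow : (0:ℝ) ≤ (1 - δ) ^ n := pow_nonneg (by linarith) n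
  rw [hfA, abs_sub_le_iff]
  constructor
  · have h1 : ∀ y, g x - (1 - δ) ^ n ≤ g y := fun y => by linarith [hosc x y A hA]
    have h2 : ∫ _, (g x - (1 - δ) ^ n) ∂f ≤ ∫ y, g y ∂f :=
      integral_mono (integrable_const _) hInt h1
    rw [integral_const, measureReal_def, measure_univ] at h2
    simp at h2
    linarith
  · have h1 : ∀ y, g y ≤ g x + (1 - δ) ^ n := fun y => by linarith [hosc y x A hA]
    have h2 : ∫ y, g y ∂f ≤ ∫ _, (g x + (1 - δ) ^ n) ∂f :=
      integral_mono hInt (integrable_const _) h1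
    rw [integral_const, measureReal_def, measure_univ] at h2
    simp at h2
    linarith
end

section
/- The independence Metropolis–Hastings kernel with proposal g and target f satisfying f(x) ≤ M g(x) for all x has transition density bounded below by f(z)/M off the diagonal, and consequently is uniformly ergodic: d_TV(pⁿ(x,·), f) ≤ (1 − 1/M)ⁿ for all x and n. -/
open MeasureTheory

/-- Iterated transition law: `measureIterate κ n x` is the distribution after `n` steps
of the transition `κ` started at `x`. -/
noncomputable def measureIterate {α : Type*} [MeasurableSpace α]
    (κ : α → Measure α) : ℕ → α → Measure α
  | 0, x => Measure.dirac x
  | n + 1, x => (measureIterate κ n x).bind κ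

/-- **Uniform ergodicity of the independence sampler.** With target density `f` and
proposal density `g` (w.r.t. `μ`) satisfying `f ≤ M g` everywhere, the independence
Metropolis–Hastings kernel
`κ x = (accepted-move part with density z ↦ g z · a x z) + (rejection mass at x)`,
where `a x z = min {1, (f z g x)/(f x g z)}`, has off-diagonal transition density bounded
below by `f z / M`, and is uniformly ergodic:
`d_TV(κⁿ(x,·), f dμ) ≤ (1 − 1/M)ⁿ` for all `x` and `n`. -/
theorem independence_sampler_uniformly_ergodic
    {α : Type*} [MeasurableSpace α] (μ : Measure α) [SigmaFinite μ]
    (f g : α → ℝ) (hf : Measurable f) (hg : Measurable g)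
    (hf0 : ∀ x, 0 < f x) (hg0 : ∀ x, 0 < g x)
    (hf1 : ∫ x, f x ∂μ = 1) (hg1 : ∫ x, g x ∂μ = 1)
    (M : ℝ) (hM : 1 ≤ M) (hMg : ∀ x, f x ≤ M * g x)
    (a : α → α → ℝ) (ha : ∀ x z, a x z = min 1 (f z * g x / (f x * g z)))
    (r : α → ℝ) (hr : ∀ x, r x = 1 - ∫ z, g z * a x z ∂μ)
    (κ : α → Measure α)
    (hκ : ∀ x, κ x = μ.withDensity (fun z => ENNReal.ofReal (g z * a x z))
        + (ENNReal.ofReal (r x)) • Measure.dirac x) :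
    (∀ x z, f z / M ≤ g z * a x z) ∧
      ∀ (x : α) (n : ℕ) (A : Set α), MeasurableSet A →
        |((measureIterate κ n x) A).toReal
            - ((μ.withDensity fun z => ENNReal.ofReal (f z)) A).toReal|
          ≤ (1 - 1 / M) ^ n := by
  have hM0 : (0:ℝ) < M := lt_of_lt_of_le one_pos hM
  -- bounds for `a`
  have ha0 : ∀ x z, 0 ≤ a x z := by
    intro x z; rw [ha]
    exact le_min zero_le_one
      (div_nonneg (mul_nonneg (hf0 z).le (hg0 x).le) (mul_nonneg (hf0 x).le (hg0 z).le))
  have ha1 : ∀ x z, a x z ≤ 1 := by intro x z; rw [ha]; exact min_le_left _ _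
  -- Part 1
  have part1 : ∀ x z, f z / M ≤ g z * a x z := by
    intro x z
    rw [ha, mul_min_of_nonneg _ _ (hg0 z).le]
    refine le_min ?_ ?_
    · rw [div_le_iff₀ hM0, mul_comm]
      simpa [mul_comm] using hMg z
    · have hgz : g z ≠ 0 := (hg0 z).ne'
      have hfx : f x ≠ 0 := (hf0 x).ne'
      have heq : g z * (f z * g x / (f x * g z)) = f z * g x / f x := by
        field_simp
      rw [heq, div_le_div_iff₀ hM0 (hf0 x)]
      nlinarith [hMg x, (hf0 z).le, hf0 x, hg0 x]
  -- integrability of f and g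
  have hIntg : Integrable g μ := by
    by_contra h; rw [integral_undef h] at hg1; norm_num at hg1
  have hIntf : Integrable f μ := by
    by_contra h; rw [integral_undef h] at hf1; norm_num at hf1
  -- measurability of a
  have ha_meas : Measurable (Function.uncurry a) := by
    have : Function.uncurry a
        = fun p : α × α => min 1 (f p.2 * g p.1 / (f p.1 * g p.2)) := by
      funext p; exact ha p.1 p.2
    rw [this]
    exact measurable_const.min
      (((hf.comp measurable_snd).mul (hg.comp measurable_fst)).div
        ((hf.comp measurable_fst).mul (hg.comp measurable_snd)))
  have ha_meas' : ∀ x, Measurable (fun z => a x z) :=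
    fun x => ha_meas.comp (measurable_const.prodMk measurable_id)
  have hga_meas : ∀ x, Measurable (fun z => g z * a x z) :=
    fun x => hg.mul (ha_meas' x)
  have hInt_ga : ∀ x, Integrable (fun z => g z * a x z) μ := by
    intro x
    refine hIntg.mono (hga_meas x).aestronglyMeasurable
      (Filter.Eventually.of_forall fun z => ?_)
    rw [Real.norm_eq_abs, Real.norm_eq_abs,
      abs_of_nonneg (mul_nonneg (hg0 z).le (ha0 x z)), abs_of_nonneg (hg0 z).le]
    nlinarith [hg0 z, ha0 x z, ha1 x z]
  have hga_le : ∀ x, ∫ z, g z * a x z ∂μ ≤ 1 := by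
    intro x
    rw [← hg1]
    exact integral_mono (hInt_ga x) hIntg fun z => by nlinarith [hg0 z, ha1 x z]
  have hga_nonneg : ∀ x, 0 ≤ ∫ z, g z * a x z ∂μ :=
    fun x => integral_nonneg fun z => mul_nonneg (hg0 z).le (ha0 x z)
  have hr0 : ∀ x, 0 ≤ r x := by intro x; rw [hr]; linarith [hga_le x]
  have hr1 : ∀ x, r x ≤ 1 := by intro x; rw [hr]; linarith [hga_nonneg x]
  -- the target measure
  set π : Measure α := μ.withDensity (fun z => ENNReal.ofReal (f z)) with hπ
  have hπA : ∀ A : Set α, MeasurableSet A → π A = ∫⁻ z in A, ENNReal.ofReal (f z) ∂μ :=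
    fun A hA => withDensity_apply _ hA
  have hπuniv : π Set.univ = 1 := by
    rw [hπA _ MeasurableSet.univ, Measure.restrict_univ,
      ← ofReal_integral_eq_lintegral_ofReal hIntf
        (Filter.Eventually.of_forall fun z => (hf0 z).le), hf1, ENNReal.ofReal_one]
  haveI hπ_prob : IsProbabilityMeasure π := ⟨hπuniv⟩
  -- lintegral of the acceptance density
  have hlga : ∀ x, ∫⁻ z, ENNReal.ofReal (g z * a x z) ∂μ = ENNReal.ofReal (1 - r x) := by
    intro x
    rw [← ofReal_integral_eq_lintegral_ofReal (hInt_ga x)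
      (Filter.Eventually.of_forall fun z => mul_nonneg (hg0 z).le (ha0 x z)), hr]
    ring_nf
  -- κ applied to sets
  have hκA : ∀ x (A : Set α), MeasurableSet A →
      κ x A = ∫⁻ z in A, ENNReal.ofReal (g z * a x z) ∂μ
        + ENNReal.ofReal (r x) * A.indicator 1 x := by
    intro x A hA
    rw [hκ, Measure.add_apply, withDensity_apply _ hA, Measure.smul_apply,
      Measure.dirac_apply' _ hA, smul_eq_mul]
  have hκuniv : ∀ x, κ x Set.univ = 1 := by
    intro x
    rw [hκA _ _ MeasurableSet.univ, Measure.restrict_univ, hlga,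
      Set.indicator_univ, Pi.one_apply, mul_one,
      ← ENNReal.ofReal_add (by linarith [hr1 x]) (hr0 x)]
    norm_num
  -- measurability of κ
  have hr_meas : Measurable r := by
    have : r = fun x => 1 - ∫ z, g z * a x z ∂μ := funext hr
    rw [this]
    refine measurable_const.sub ?_
    have : StronglyMeasurable (fun p : α × α => g p.2 * a p.1 p.2) :=
      ((hg.comp measurable_snd).mul ha_meas).stronglyMeasurable
    exact this.integral_prod_right'.measurable
  have hκ_meas : Measurable κ := by
    refine Measure.measurable_of_measurable_coe _ fun A hA => ?_
    have : (fun x => κ x A)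
        = fun x => (∫⁻ z, ENNReal.ofReal (g z * a x z) * A.indicator 1 z ∂μ)
          + ENNReal.ofReal (r x) * A.indicator 1 x := by
      funext x
      rw [hκA x A hA]
      congr 1
      rw [← lintegral_indicator hA]
      refine lintegral_congr fun z => ?_
      by_cases hz : z ∈ A <;> simp [hz]
    rw [this]
    refine Measurable.add ?_ ((ENNReal.measurable_ofReal.comp hr_meas).mul
      (measurable_one.indicator hA))
    exact Measurable.lintegral_prod_right'
      ((ENNReal.measurable_ofReal.comp ((hg.comp measurable_snd).mul ha_meas)).mul
        ((measurable_one.indicator hA).comp measurable_snd))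
  have hκA_meas : ∀ (A : Set α), MeasurableSet A → Measurable fun y => κ y A :=
    fun A hA => (Measure.measurable_coe hA).comp hκ_meas
  -- detailed balance
  set φ : α → α → ENNReal := fun y z => ENNReal.ofReal (f y * (g z * a y z)) with hφ
  have hdb : ∀ y z, φ y z = φ z y := by
    intro y z
    have key : ∀ u v : α, f u * (g v * a u v) = min (f u * g v) (f v * g u) := by
      intro u v
      rw [ha, mul_min_of_nonneg _ _ (hg0 v).le, mul_min_of_nonneg _ _ (hf0 u).le]
      congr 1
      · ring
      · have h1 : f u ≠ 0 := (hf0 u).ne'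
        have h2 : g v ≠ 0 := (hg0 v).ne'
        field_simp
    rw [hφ]; dsimp only
    rw [key, key, min_comm]
  have hφ_meas : Measurable (Function.uncurry φ) := by
    apply ENNReal.measurable_ofReal.comp
    exact (hf.comp measurable_fst).mul ((hg.comp measurable_snd).mul ha_meas)
  have hφ_meas' : ∀ y, Measurable (φ y) :=
    fun y => hφ_meas.comp (measurable_const.prodMk measurable_id)
  have hφ_lint : ∀ y, ∫⁻ z, φ y z ∂μ = ENNReal.ofReal (f y * (1 - r y)) := by
    intro y
    have : ∀ z, φ y z = ENNReal.ofReal (f y) * ENNReal.ofReal (g z * a y z) := by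
      intro z; rw [hφ]; dsimp only; rw [ENNReal.ofReal_mul (hf0 y).le]
    calc ∫⁻ z, φ y z ∂μ
        = ∫⁻ z, ENNReal.ofReal (f y) * ENNReal.ofReal (g z * a y z) ∂μ :=
          lintegral_congr this
      _ = ENNReal.ofReal (f y) * ∫⁻ z, ENNReal.ofReal (g z * a y z) ∂μ :=
          lintegral_const_mul _ (hga_meas y).ennreal_ofReal
      _ = ENNReal.ofReal (f y * (1 - r y)) := by
          rw [hlga, ← ENNReal.ofReal_mul (hf0 y).le]
  -- stationarity of π
  have hstat : ∀ A : Set α, MeasurableSet A → ∫⁻ y, κ y A ∂π = π A := by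
    intro A hA
    have hπint : ∫⁻ y, κ y A ∂π = ∫⁻ y, ENNReal.ofReal (f y) * κ y A ∂μ := by
      rw [hπ, lintegral_withDensity_eq_lintegral_mul _
        hf.ennreal_ofReal (hκA_meas A hA)]
      rfl
    have hexp : ∀ y, ENNReal.ofReal (f y) * κ y A
        = (∫⁻ z in A, φ y z ∂μ)
          + (ENNReal.ofReal (f y) - ENNReal.ofReal (f y * (1 - r y))) * A.indicator 1 y := by
      intro y
      rw [hκA y A hA, mul_add]
      congr 1
      · rw [← lintegral_const_mul _ (hga_meas y).ennreal_ofReal]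
        refine lintegral_congr fun z => ?_
        rw [hφ]; dsimp only
        rw [ENNReal.ofReal_mul (hf0 y).le]
      · have h1 : ENNReal.ofReal (f y) * ENNReal.ofReal (r y)
            = ENNReal.ofReal (f y) - ENNReal.ofReal (f y * (1 - r y)) := by
          rw [← ENNReal.ofReal_mul (hf0 y).le,
            ← ENNReal.ofReal_sub _ (by nlinarith [hf0 y, hr1 y])]
          ring_nf
        rw [← mul_assoc, h1]
    -- measurability helpers
    have hmeas1 : Measurable fun y => ∫⁻ z in A, φ y z ∂μ :=
      Measurable.lintegral_prod_right' (ν := μ.restrict A) hφ_meas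
    have hmeas3 : Measurable fun y =>
        ENNReal.ofReal (f y) - ENNReal.ofReal (f y * (1 - r y)) :=
      (ENNReal.measurable_ofReal.comp hf).sub
        (ENNReal.measurable_ofReal.comp (hf.mul (measurable_const.sub hr_meas)))
    have hswap : ∫⁻ y, ∫⁻ z in A, φ y z ∂μ ∂μ = ∫⁻ y in A, ∫⁻ z, φ y z ∂μ ∂μ := by
      rw [lintegral_lintegral_swap (hφ_meas.aemeasurable)]
      exact lintegral_congr fun z => lintegral_congr fun y => hdb y z
    calc ∫⁻ y, κ y A ∂π
        = ∫⁻ y, ((∫⁻ z in A, φ y z ∂μ)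
            + (ENNReal.ofReal (f y) - ENNReal.ofReal (f y * (1 - r y)))
              * A.indicator 1 y) ∂μ := by
          rw [hπint]; exact lintegral_congr hexp
      _ = (∫⁻ y, ∫⁻ z in A, φ y z ∂μ ∂μ)
          + ∫⁻ y, (ENNReal.ofReal (f y) - ENNReal.ofReal (f y * (1 - r y)))
              * A.indicator 1 y ∂μ :=
          lintegral_add_left hmeas1 _
      _ = (∫⁻ y in A, ∫⁻ z, φ y z ∂μ ∂μ)
          + ∫⁻ y in A, (ENNReal.ofReal (f y) - ENNReal.ofReal (f y * (1 - r y))) ∂μ := by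
          rw [hswap]
          congr 1
          rw [← lintegral_indicator hA]
          refine lintegral_congr fun y => ?_
          by_cases hy : y ∈ A <;> simp [hy]
      _ = ∫⁻ y in A, ((∫⁻ z, φ y z ∂μ)
            + (ENNReal.ofReal (f y) - ENNReal.ofReal (f y * (1 - r y)))) ∂μ :=
          (lintegral_add_left (by
            exact Measurable.lintegral_prod_right' (ν := μ) hφ_meas) _).symm
      _ = ∫⁻ y in A, ENNReal.ofReal (f y) ∂μ := by
          refine lintegral_congr fun y => ?_
          rw [hφ_lint y, add_comm]
          refine tsub_add_cancel_of_le (ENNReal.ofReal_le_ofReal ?_)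
          nlinarith [hf0 y, hr0 y, hr1 y]
      _ = π A := (hπA A hA).symm
  -- minorization
  have hmin : ∀ y (A : Set α), MeasurableSet A →
      ENNReal.ofReal (1 / M) * π A ≤ κ y A := by
    intro y A hA
    rw [hκA y A hA, hπA A hA]
    refine le_trans ?_ le_self_add
    rw [← lintegral_const_mul _ hf.ennreal_ofReal]
    refine lintegral_mono fun z => ?_
    rw [← ENNReal.ofReal_mul (by positivity)]
    exact ENNReal.ofReal_le_ofReal (by rw [one_div, inv_mul_eq_div]; exact part1 y z)
  -- Doeblin decomposition by induction
  set δ : ℝ := 1 - 1 / M with hδ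
  have hδ0 : 0 ≤ δ := by
    have h1 : 1 / M ≤ 1 := by
      rw [div_le_one hM0]; exact hM
    simp only [hδ]; linarith
  have hδ1 : δ ≤ 1 := by
    have h1 : 0 < 1 / M := by positivity
    simp only [hδ]; linarith
  have key : ∀ n x, ∃ ρ : Measure α, ρ Set.univ = ENNReal.ofReal (δ ^ n) ∧
      measureIterate κ n x = ENNReal.ofReal (1 - δ ^ n) • π + ρ := by
    intro n
    induction n with
    | zero =>
      intro x
      refine ⟨Measure.dirac x, by simp, ?_⟩
      simp [measureIterate]
    | succ n ih =>
      intro x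
      obtain ⟨ρ, hρu, hρe⟩ := ih x
      have hδn0 : (0:ℝ) ≤ δ ^ n := pow_nonneg hδ0 n
      have hδn1 : δ ^ n ≤ 1 := pow_le_one₀ hδ0 hδ1
      set σ : Measure α := ρ.bind κ with hσ
      have hσA : ∀ A : Set α, MeasurableSet A → σ A = ∫⁻ y, κ y A ∂ρ :=
        fun A hA => Measure.bind_apply hA hκ_meas.aemeasurable
      -- total mass of σ
      have hσuniv : σ Set.univ = ENNReal.ofReal (δ ^ n) := by
        rw [hσA _ MeasurableSet.univ]
        calc ∫⁻ y, κ y Set.univ ∂ρ = ∫⁻ _, 1 ∂ρ := lintegral_congr hκuniv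
          _ = ρ Set.univ := lintegral_one
          _ = _ := hρu
      -- minorization of σ
      have hσge : ENNReal.ofReal (δ ^ n / M) • π ≤ σ := by
        rw [Measure.le_iff]
        intro A hA
        rw [Measure.smul_apply, smul_eq_mul, hσA A hA]
        calc ENNReal.ofReal (δ ^ n / M) * π A
            = ENNReal.ofReal (δ ^ n) * (ENNReal.ofReal (1 / M) * π A) := by
              rw [← mul_assoc, ← ENNReal.ofReal_mul hδn0]
              ring_nf
          _ = ∫⁻ _, ENNReal.ofReal (1 / M) * π A ∂ρ := by
              rw [lintegral_const, hρu]; ring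
          _ ≤ ∫⁻ y, κ y A ∂ρ := lintegral_mono fun y => hmin y A hA
      haveI : IsFiniteMeasure (ENNReal.ofReal (δ ^ n / M) • π) := by
        constructor
        rw [Measure.smul_apply, smul_eq_mul, hπuniv, mul_one]
        exact ENNReal.ofReal_lt_top
      set ρ' : Measure α := σ - ENNReal.ofReal (δ ^ n / M) • π with hρ'
      have hcancel : ρ' + ENNReal.ofReal (δ ^ n / M) • π = σ :=
        Measure.sub_add_cancel_of_le hσge
      have hρ'univ : ρ' Set.univ = ENNReal.ofReal (δ ^ (n + 1)) := by
        have h1 : ρ' Set.univ + ENNReal.ofReal (δ ^ n / M) = ENNReal.ofReal (δ ^ n) := by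
          have := congrArg (fun m : Measure α => m Set.univ) hcancel
          simpa [Measure.add_apply, Measure.smul_apply, smul_eq_mul, hπuniv, hσuniv]
            using this
        have h2 : ENNReal.ofReal (δ ^ n) - ENNReal.ofReal (δ ^ n / M)
            = ENNReal.ofReal (δ ^ (n + 1)) := by
          rw [← ENNReal.ofReal_sub _ (by positivity)]
          congr 1
          simp only [hδ]
          field_simp [hM0.ne']
          have hX : M * ((M - 1) / M) = M - 1 := by rw [mul_div_assoc']; exact mul_div_cancel_left₀ _ hM0.ne'
          rw [pow_succ]
          linear_combination (-(((M - 1) / M) ^ n)) * hX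
        calc ρ' Set.univ
            = ρ' Set.univ + ENNReal.ofReal (δ ^ n / M) - ENNReal.ofReal (δ ^ n / M) :=
              (ENNReal.add_sub_cancel_right ENNReal.ofReal_ne_top).symm
          _ = ENNReal.ofReal (δ ^ n) - ENNReal.ofReal (δ ^ n / M) := by rw [h1]
          _ = ENNReal.ofReal (δ ^ (n + 1)) := h2
      refine ⟨ρ', hρ'univ, ?_⟩
      have hcoef : ENNReal.ofReal (1 - δ ^ n) + ENNReal.ofReal (δ ^ n / M)
          = ENNReal.ofReal (1 - δ ^ (n + 1)) := by
        rw [← ENNReal.ofReal_add (by linarith) (by positivity)]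
        congr 1
        simp only [hδ]
        field_simp [hM0.ne']
        have hX : M * ((M - 1) / M) = M - 1 := by rw [mul_div_assoc']; exact mul_div_cancel_left₀ _ hM0.ne'
        rw [pow_succ]
        linear_combination (((M - 1) / M) ^ n) * hX
      refine Measure.ext fun A hA => ?_
      have hlhs : measureIterate κ (n + 1) x A
          = ENNReal.ofReal (1 - δ ^ n) * π A + σ A := by
        show (measureIterate κ n x).bind κ A = _
        rw [Measure.bind_apply hA hκ_meas.aemeasurable, hρe, lintegral_add_measure,
          lintegral_smul_measure, hstat A hA, hσA A hA, smul_eq_mul]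
      have hσval : σ A = ρ' A + ENNReal.ofReal (δ ^ n / M) * π A := by
        conv_lhs => rw [← hcancel]
        rw [Measure.add_apply, Measure.smul_apply, smul_eq_mul]
      rw [hlhs, hσval, Measure.add_apply, Measure.smul_apply, smul_eq_mul, ← hcoef]
      ring
  -- conclusion
  refine ⟨part1, ?_⟩
  intro x n A hA
  obtain ⟨ρ, hρu, hρe⟩ := key n x

  have hδn0 : (0:ℝ) ≤ δ ^ n := pow_nonneg hδ0 n
  have hδn1 : δ ^ n ≤ 1 := pow_le_one₀ hδ0 hδ1
  have hval : (measureIterate κ n x) A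
      = ENNReal.ofReal (1 - δ ^ n) * π A + ρ A := by
    rw [hρe, Measure.add_apply, Measure.smul_apply, smul_eq_mul]
  have hπAle : π A ≤ 1 := by
    rw [← hπuniv]; exact measure_mono (Set.subset_univ A)
  have hρAle : ρ A ≤ ENNReal.ofReal (δ ^ n) := by
    rw [← hρu]; exact measure_mono (Set.subset_univ A)
  have hπA_ne : π A ≠ ⊤ := (lt_of_le_of_lt hπAle ENNReal.one_lt_top).ne
  have hρA_ne : ρ A ≠ ⊤ := (lt_of_le_of_lt hρAle ENNReal.ofReal_lt_top).ne
  have hp1 : (π A).toReal ≤ 1 := by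
    rw [← ENNReal.toReal_one]
    exact ENNReal.toReal_mono ENNReal.one_ne_top hπAle
  have hp0 : 0 ≤ (π A).toReal := ENNReal.toReal_nonneg
  have hq1 : (ρ A).toReal ≤ δ ^ n := by
    have := ENNReal.toReal_mono ENNReal.ofReal_ne_top hρAle
    rwa [ENNReal.toReal_ofReal hδn0] at this
  have hq0 : 0 ≤ (ρ A).toReal := ENNReal.toReal_nonneg
  rw [hval, ENNReal.toReal_add (by
      exact ENNReal.mul_ne_top ENNReal.ofReal_ne_top hπA_ne) hρA_ne,
    ENNReal.toReal_mul, ENNReal.toReal_ofReal (by linarith)]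
  rw [abs_le]
  constructor <;> nlinarith [(ENNReal.toReal_nonneg : 0 ≤ (π A).toReal)]
end
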